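/- Let a₁, a₂, a₃ be real numbers with 0 < a₃ < a₂ < a₁ < 1, and define f : ℝ → ℝ by f(x) = a₁·(1/2 + √(1/4 − (a₂/a₁)(1/4 − (1/2 − x)²)))·(1/2 + √(1/4 − (a₃/a₁)(1/4 − (1/2 − x)²))). Then there is at most one r ∈ (0,1) with f(r) = r; together with existence, f has exactly one fixed point in (0,1). -/

import Mathlib

private lemma sqrt_strict_cvx (α c s t l m : ℝ) (hα : 0 < α) (hc : 0 < c)
    (hst : s ≠ t) (hl : 0 < l) (hm : 0 < m) (hlm : l + m = 1) :
    Real.sqrt (α + c * (l * s + m * t) ^ 2) <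
      l * Real.sqrt (α + c * s ^ 2) + m * Real.sqrt (α + c * t ^ 2) := by
  have hm1 : m = 1 - l := by linarith
  subst hm1
  set A := Real.sqrt (α + c * s ^ 2) with hAdef
  set B := Real.sqrt (α + c * t ^ 2) with hBdef
  have hA : 0 < A := Real.sqrt_pos.2 (by positivity)
  have hB : 0 < B := Real.sqrt_pos.2 (by positivity)
  have hA2 : A ^ 2 = α + c * s ^ 2 := Real.sq_sqrt (by positivity)
  have hB2 : B ^ 2 = α + c * t ^ 2 := Real.sq_sqrt (by positivity)
  have hst2 : 0 < (s - t) ^ 2 := by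
    have : s - t ≠ 0 := sub_ne_zero.2 hst
    positivity
  have hAB : α + c * s * t < A * B := by
    nlinarith [mul_pos hA hB, mul_pos hα hc, sq_nonneg (A * B - (α + c * s * t)),
      sq_nonneg (A - B), sq_nonneg (A + B)]
  have h2lm := mul_lt_mul_of_pos_left hAB (show (0:ℝ) < 2 * (l * (1 - l)) by nlinarith [mul_pos hl hm])
  have expand : (l * A + (1 - l) * B) ^ 2 =
      l ^ 2 * (α + c * s ^ 2) + (1 - l) ^ 2 * (α + c * t ^ 2) + 2 * (l * (1 - l)) * (A * B) := by
    linear_combination l ^ 2 * hA2 + (1 - l) ^ 2 * hB2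
  rw [Real.sqrt_lt' (by positivity)]
  nlinarith [h2lm, expand]

private lemma monovary_sqrt (α₂ α₃ c₂ c₃ p q : ℝ) (hα₂ : 0 < α₂) (hα₃ : 0 < α₃)
    (hc₂ : 0 < c₂) (hc₃ : 0 < c₃) (hp : 0 ≤ p) (hq : 0 ≤ q) :
    0 ≤ (Real.sqrt (α₂ + c₂ * p) - Real.sqrt (α₂ + c₂ * q)) *
        (Real.sqrt (α₃ + c₃ * p) - Real.sqrt (α₃ + c₃ * q)) := by
  set A := Real.sqrt (α₂ + c₂ * p)
  set B := Real.sqrt (α₂ + c₂ * q)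
  set C := Real.sqrt (α₃ + c₃ * p)
  set D := Real.sqrt (α₃ + c₃ * q)
  have hA : 0 < A := Real.sqrt_pos.2 (by positivity)
  have hB : 0 < B := Real.sqrt_pos.2 (by positivity)
  have hC : 0 < C := Real.sqrt_pos.2 (by positivity)
  have hD : 0 < D := Real.sqrt_pos.2 (by positivity)
  have hA2 : A ^ 2 = α₂ + c₂ * p := Real.sq_sqrt (by positivity)
  have hB2 : B ^ 2 = α₂ + c₂ * q := Real.sq_sqrt (by positivity)
  have hC2 : C ^ 2 = α₃ + c₃ * p := Real.sq_sqrt (by positivity)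
  have hD2 : D ^ 2 = α₃ + c₃ * q := Real.sq_sqrt (by positivity)
  have key : (A - B) * (C - D) * ((A + B) * (C + D)) = c₂ * c₃ * (p - q) ^ 2 := by
    have e1 : A ^ 2 - B ^ 2 = c₂ * (p - q) := by rw [hA2, hB2]; ring
    have e2 : C ^ 2 - D ^ 2 = c₃ * (p - q) := by rw [hC2, hD2]; ring
    calc (A - B) * (C - D) * ((A + B) * (C + D))
        = (A ^ 2 - B ^ 2) * (C ^ 2 - D ^ 2) := by ring
      _ = c₂ * c₃ * (p - q) ^ 2 := by rw [e1, e2]; ring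
  have hpos : 0 < (A + B) * (C + D) := by positivity
  by_contra h
  push_neg at h
  have := mul_neg_of_neg_of_pos h hpos
  rw [key] at this
  nlinarith [sq_nonneg (p - q), mul_pos hc₂ hc₃]

private lemma key_strict (α₂ α₃ c₂ c₃ x y l m : ℝ) (hα₂ : 0 < α₂) (hα₃ : 0 < α₃)
    (hc₂ : 0 < c₂) (hc₃ : 0 < c₃) (hxy : x ≠ y) (hl : 0 < l) (hm : 0 < m)
    (hlm : l + m = 1) :
    (1/2 + Real.sqrt (α₂ + c₂ * (l * x + m * y - 1/2) ^ 2)) *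
      (1/2 + Real.sqrt (α₃ + c₃ * (l * x + m * y - 1/2) ^ 2)) <
    l * ((1/2 + Real.sqrt (α₂ + c₂ * (x - 1/2) ^ 2)) *
          (1/2 + Real.sqrt (α₃ + c₃ * (x - 1/2) ^ 2))) +
    m * ((1/2 + Real.sqrt (α₂ + c₂ * (y - 1/2) ^ 2)) *
          (1/2 + Real.sqrt (α₃ + c₃ * (y - 1/2) ^ 2))) := by
  have hm1 : m = 1 - l := by linarith
  subst hm1
  set s := x - 1/2 with hs
  set t := y - 1/2 with ht
  have hst : s ≠ t := by
    simp only [hs, ht]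
    exact fun h => hxy (by linarith [sub_left_inj.1 h])
  have hz : l * x + (1 - l) * y - 1/2 = l * s + (1 - l) * t := by
    simp only [hs, ht]; nlinarith [hlm]
  rw [hz]
  have h2 := sqrt_strict_cvx α₂ c₂ s t l (1 - l) hα₂ hc₂ hst hl hm hlm
  have h3 := sqrt_strict_cvx α₃ c₃ s t l (1 - l) hα₃ hc₃ hst hl hm hlm
  have hmono := monovary_sqrt α₂ α₃ c₂ c₃ (s ^ 2) (t ^ 2) hα₂ hα₃ hc₂ hc₃
    (sq_nonneg s) (sq_nonneg t)
  set A := Real.sqrt (α₂ + c₂ * s ^ 2)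
  set B := Real.sqrt (α₂ + c₂ * t ^ 2)
  set C := Real.sqrt (α₃ + c₃ * s ^ 2)
  set D := Real.sqrt (α₃ + c₃ * t ^ 2)
  set Az := Real.sqrt (α₂ + c₂ * (l * s + (1 - l) * t) ^ 2)
  set Cz := Real.sqrt (α₃ + c₃ * (l * s + (1 - l) * t) ^ 2)
  have hAz : 0 ≤ Az := Real.sqrt_nonneg _
  have hCz : 0 ≤ Cz := Real.sqrt_nonneg _
  have hA : 0 ≤ A := Real.sqrt_nonneg _
  have hB : 0 ≤ B := Real.sqrt_nonneg _
  have hC : 0 ≤ C := Real.sqrt_nonneg _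
  have hD : 0 ≤ D := Real.sqrt_nonneg _
  have step1 : (1/2 + Az) * (1/2 + Cz) < (1/2 + (l * A + (1 - l) * B)) * (1/2 + (l * C + (1 - l) * D)) := by
    have p1 : (0:ℝ) < 1/2 + Cz := by linarith
    have p2 : (0:ℝ) < 1/2 + (l * A + (1 - l) * B) := by positivity
    nlinarith [h2, h3, p1, p2]
  have step2 : (1/2 + (l * A + (1 - l) * B)) * (1/2 + (l * C + (1 - l) * D)) ≤
      l * ((1/2 + A) * (1/2 + C)) + (1 - l) * ((1/2 + B) * (1/2 + D)) := by
    nlinarith [mul_nonneg (mul_pos hl hm).le hmono]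
  linarith

theorem fixed_point_unique
    (a₁ a₂ a₃ : ℝ)
    (ha₃ : 0 < a₃) (h₃₂ : a₃ < a₂) (h₂₁ : a₂ < a₁) (ha₁ : a₁ < 1)
    (f : ℝ → ℝ)
    (hf : ∀ x : ℝ, f x =
      a₁ * (1/2 + Real.sqrt (1/4 - (a₂/a₁) * (1/4 - (1/2 - x)^2)))
         * (1/2 + Real.sqrt (1/4 - (a₃/a₁) * (1/4 - (1/2 - x)^2)))) :
    (∀ r s : ℝ, 0 < r → r < 1 → 0 < s → s < 1 → f r = r → f s = s → r = s) ∧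
    ∃! r : ℝ, 0 < r ∧ r < 1 ∧ f r = r := by
  have ha₁pos : 0 < a₁ := lt_trans (lt_trans ha₃ h₃₂) h₂₁
  set c₂ := a₂ / a₁ with hc₂def
  set c₃ := a₃ / a₁ with hc₃def
  have hc₂ : 0 < c₂ := div_pos (lt_trans ha₃ h₃₂) ha₁pos
  have hc₃ : 0 < c₃ := div_pos ha₃ ha₁pos
  have hc₂1 : c₂ < 1 := (div_lt_one ha₁pos).2 h₂₁
  have hc₃1 : c₃ < 1 := (div_lt_one ha₁pos).2 (lt_trans h₃₂ h₂₁)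
  set α₂ := (1 - c₂) / 4 with hα₂def
  set α₃ := (1 - c₃) / 4 with hα₃def
  have hα₂ : 0 < α₂ := by simp only [hα₂def]; linarith
  have hα₃ : 0 < α₃ := by simp only [hα₃def]; linarith
  have hf' : ∀ x : ℝ, f x =
      a₁ * ((1/2 + Real.sqrt (α₂ + c₂ * (x - 1/2) ^ 2)) *
            (1/2 + Real.sqrt (α₃ + c₃ * (x - 1/2) ^ 2))) := by
    intro x
    rw [hf x,
      show (1/4 - c₂ * (1/4 - (1/2 - x)^2)) = α₂ + c₂ * (x - 1/2) ^ 2 by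
        simp only [hα₂def]; ring,
      show (1/4 - c₃ * (1/4 - (1/2 - x)^2)) = α₃ + c₃ * (x - 1/2) ^ 2 by
        simp only [hα₃def]; ring]
    ring
  have hf1 : f 1 = a₁ := by
    rw [hf' 1,
      show α₂ + c₂ * ((1:ℝ) - 1/2) ^ 2 = (1/2) ^ 2 by simp only [hα₂def]; ring,
      show α₃ + c₃ * ((1:ℝ) - 1/2) ^ 2 = (1/2) ^ 2 by simp only [hα₃def]; ring,
      Real.sqrt_sq (by norm_num : (0:ℝ) ≤ 1/2)]
    ring
  have hf0 : f 0 = a₁ := by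
    rw [hf' 0,
      show α₂ + c₂ * ((0:ℝ) - 1/2) ^ 2 = (1/2) ^ 2 by simp only [hα₂def]; ring,
      show α₃ + c₃ * ((0:ℝ) - 1/2) ^ 2 = (1/2) ^ 2 by simp only [hα₃def]; ring,
      Real.sqrt_sq (by norm_num : (0:ℝ) ≤ 1/2)]
    ring
  -- main strict inequality at two fixed points
  have main_lt : ∀ r s : ℝ, 0 < r → s < 1 → r < s → f r = r → f s = s → False := by
    intro r s hr0 hs1 hrs hfr hfs
    have hr1 : r < 1 := lt_trans hrs hs1
    set l := (1 - s) / (1 - r) with hldef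
    set m := (s - r) / (1 - r) with hmdef
    have h1r : 0 < 1 - r := by linarith
    have hl : 0 < l := div_pos (by linarith) h1r
    have hm : 0 < m := div_pos (by linarith) h1r
    have hlm : l + m = 1 := by
      rw [hldef, hmdef, ← add_div, div_eq_one_iff_eq h1r.ne']; ring
    have hz : l * r + m * 1 = s := by
      rw [hldef, hmdef, div_mul_eq_mul_div, mul_one, ← add_div, div_eq_iff h1r.ne']
      ring
    have hkey := key_strict α₂ α₃ c₂ c₃ r 1 l m hα₂ hα₃ hc₂ hc₃ (by linarith) hl hm hlm
    rw [hz] at hkey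
    have hfs' : f s < l * f r + m * f 1 := by
      rw [hf' s, hf' r, hf' 1]
      calc a₁ * ((1/2 + Real.sqrt (α₂ + c₂ * (s - 1/2) ^ 2)) *
            (1/2 + Real.sqrt (α₃ + c₃ * (s - 1/2) ^ 2)))
          < a₁ * (l * ((1/2 + Real.sqrt (α₂ + c₂ * (r - 1/2) ^ 2)) *
                (1/2 + Real.sqrt (α₃ + c₃ * (r - 1/2) ^ 2))) +
              m * ((1/2 + Real.sqrt (α₂ + c₂ * ((1:ℝ) - 1/2) ^ 2)) *
                (1/2 + Real.sqrt (α₃ + c₃ * ((1:ℝ) - 1/2) ^ 2)))) := by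
            exact mul_lt_mul_of_pos_left hkey ha₁pos
        _ = l * (a₁ * ((1/2 + Real.sqrt (α₂ + c₂ * (r - 1/2) ^ 2)) *
                (1/2 + Real.sqrt (α₃ + c₃ * (r - 1/2) ^ 2)))) +
            m * (a₁ * ((1/2 + Real.sqrt (α₂ + c₂ * ((1:ℝ) - 1/2) ^ 2)) *
                (1/2 + Real.sqrt (α₃ + c₃ * ((1:ℝ) - 1/2) ^ 2)))) := by ring
    rw [hfr, hfs, hf1] at hfs'
    -- s < l * r + m * a₁ < l * r + m = s
    have : m * a₁ < m := by nlinarith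
    linarith [hz, hfs']
  have huniq : ∀ r s : ℝ, 0 < r → r < 1 → 0 < s → s < 1 → f r = r → f s = s → r = s := by
    intro r s hr0 hr1 hs0 hs1 hfr hfs
    rcases lt_trichotomy r s with h | h | h
    · exact absurd (main_lt r s hr0 hs1 h hfr hfs) (by simp)
    · exact h
    · exact absurd (main_lt s r hs0 hr1 h hfs hfr) (by simp)
  refine ⟨huniq, ?_⟩
  have hcont : Continuous f := by
    have : f = fun x => a₁ * (1/2 + Real.sqrt (1/4 - (a₂/a₁) * (1/4 - (1/2 - x)^2)))
         * (1/2 + Real.sqrt (1/4 - (a₃/a₁) * (1/4 - (1/2 - x)^2))) := funext hf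
    rw [this]
    fun_prop
  have hg : Continuous fun x => f x - x := hcont.sub continuous_id
  have hmem : (0:ℝ) ∈ Set.Ioo (f 1 - 1) (f 0 - 0) := by
    rw [hf0, hf1]
    constructor <;> simp <;> linarith
  obtain ⟨r, hr, hgr⟩ := intermediate_value_Ioo' (by norm_num : (0:ℝ) ≤ 1)
    hg.continuousOn hmem
  have hfr : f r = r := by linarith [sub_eq_zero.1 hgr]
  exact ⟨r, ⟨hr.1, hr.2, hfr⟩, fun y hy => huniq y r hy.1 hy.2.1 hr.1 hr.2 hy.2.2 hfr⟩
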